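/- arXiv:2603.19820 — 3 statements merged into one kernel-verified Lean document; each statement's English description precedes it below -/
import Mathlib

section
/- Let (U, ≤) be a linear order, let X, Y ⊆ U be finite sets, and let l = c_0 ≤ c_1 ≤ ⋯ ≤ c_b = u be a monotone sequence in U (b ≥ 1). Let J ⊆ {0, …, b−1} be a set of indices of 'skipped' child ranges, and suppose that for every j ∈ J the skip decision is sound, i.e. X ∩ [c_j, c_{j+1}) = Y ∩ [c_j, c_{j+1}). Then the global range-local symmetric difference is recovered exactly from the non-skipped children: Δ_{l,u}(X,Y) = ⋃_{j ∉ J} Δ_{c_j,c_{j+1}}(X,Y). -/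
/-- The range-local symmetric difference
`Δ_{l,u}(X,Y) = Δ(X ∩ [l,u), Y ∩ [l,u))` where `Δ(A,B) = (A \ B) ∪ (B \ A)`. -/
def rangeSymmDiff {U : Type*} [LinearOrder U] (X Y : Finset U) (l u : U) : Finset U :=
  ((X.filter fun x => l ≤ x ∧ x < u) \ (Y.filter fun x => l ≤ x ∧ x < u)) ∪
    ((Y.filter fun x => l ≤ x ∧ x < u) \ (X.filter fun x => l ≤ x ∧ x < u))

lemma mem_rangeSymmDiff_iff {U : Type*} [LinearOrder U] (X Y : Finset U) (l u : U) (x : U) :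
    x ∈ rangeSymmDiff X Y l u ↔ (l ≤ x ∧ x < u) ∧ ((x ∈ X ∧ x ∉ Y) ∨ (x ∈ Y ∧ x ∉ X)) := by
  simp only [rangeSymmDiff, Finset.mem_union, Finset.mem_sdiff, Finset.mem_filter]
  tauto

lemma chain_mono {U : Type*} [LinearOrder U] (b : ℕ) (c : ℕ → U)
    (hc : ∀ i, i < b → c i ≤ c (i + 1)) :
    ∀ i j, i ≤ j → j ≤ b → c i ≤ c j := by
  intro i j hij hjb
  induction j with
  | zero => simp [Nat.le_zero.mp hij]
  | succ n ih =>
    rcases Nat.lt_or_ge i (n+1) with h | h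
    · exact le_trans (ih (Nat.lt_succ_iff.mp h) (le_trans (Nat.le_succ n) hjb))
        (hc n (Nat.lt_of_lt_of_le (Nat.lt_succ_self n) hjb))
    · have : i = n + 1 := le_antisymm hij h
      simp [this]

/-- given monotone cuts `l = c 0 ≤ c 1 ≤ ⋯ ≤ c b = u` (b ≥ 1) and a set
`J ⊆ {0, …, b-1}` of skipped child indices that are all sound
(`X ∩ [c j, c (j+1)) = Y ∩ [c j, c (j+1))` for `j ∈ J`), the local symmetric
difference on `[l,u)` is exactly the union over the non-skipped children. -/
theorem rangeSymmDiff_eq_biUnion_of_sound_skips {U : Type*} [LinearOrder U]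
    (X Y : Finset U) (b : ℕ) (hb : 1 ≤ b) (c : ℕ → U) (l u : U)
    (hl : c 0 = l) (hu : c b = u)
    (hc : ∀ i, i < b → c i ≤ c (i + 1))
    (J : Finset ℕ) (hJ : J ⊆ Finset.range b)
    (hsound : ∀ j ∈ J,
      (X.filter fun x => c j ≤ x ∧ x < c (j + 1)) =
        (Y.filter fun x => c j ≤ x ∧ x < c (j + 1))) :
    rangeSymmDiff X Y l u =
      (Finset.range b \ J).biUnion (fun j => rangeSymmDiff X Y (c j) (c (j + 1))) := by
  ext x
  simp only [Finset.mem_biUnion, Finset.mem_sdiff, Finset.mem_range,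
    mem_rangeSymmDiff_iff]
  constructor
  · rintro ⟨⟨hlx, hxu⟩, hd⟩
    -- find the least k with x < c k
    have hex : ∃ k, x < c k := ⟨b, hu ▸ hxu⟩
    classical
    have hk0 : Nat.find hex ≠ 0 := by
      intro h
      have := Nat.find_spec hex
      rw [h, hl] at this
      exact absurd hlx (not_le.mpr this)
    obtain ⟨j, hj⟩ : ∃ j, Nat.find hex = j + 1 :=
      ⟨Nat.find hex - 1, (Nat.succ_pred_eq_of_ne_zero hk0).symm⟩
    have hk : x < c (j + 1) := hj ▸ Nat.find_spec hex
    have hjx : c j ≤ x := le_of_not_gt (Nat.find_min hex (by omega))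
    have hjb : j < b := by
      have : Nat.find hex ≤ b := Nat.find_min' hex (hu ▸ hxu)
      omega
    refine ⟨j, ⟨hjb, ?_⟩, ⟨hjx, hk⟩, hd⟩
    intro hjJ
    have := hsound j hjJ
    rcases hd with ⟨hX, hY⟩ | ⟨hY, hX⟩
    · have : x ∈ Y.filter fun x => c j ≤ x ∧ x < c (j+1) := by
        rw [← this]; exact Finset.mem_filter.mpr ⟨hX, hjx, hk⟩
      exact hY (Finset.mem_filter.mp this).1
    · have : x ∈ X.filter fun x => c j ≤ x ∧ x < c (j+1) := by
        rw [this]; exact Finset.mem_filter.mpr ⟨hY, hjx, hk⟩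
      exact hX (Finset.mem_filter.mp this).1
  · rintro ⟨j, ⟨hjb, -⟩, ⟨hjx, hxj⟩, hd⟩
    refine ⟨⟨?_, ?_⟩, hd⟩
    · exact hl ▸ le_trans (chain_mono b c hc 0 j (Nat.zero_le j) (le_of_lt hjb)) hjx
    · exact hu ▸ lt_of_lt_of_le hxj (chain_mono b c hc (j+1) b hjb le_rfl)
end

section
/- For all natural numbers m, b, j with b ≥ 1, the difference of consecutive balanced cut positions ⌊(j+1)·m/b⌋ − ⌊j·m/b⌋ is equal to either ⌊m/b⌋ or ⌈m/b⌉. -/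
/-- for natural numbers `m, b, j` with `b ≥ 1`, the size
`⌊(j+1)·m/b⌋ − ⌊j·m/b⌋` of the `j`-th balanced part equals either `⌊m/b⌋` or
`⌈m/b⌉` (natural-number division rounding down resp. up, `⌈/⌉` is `Nat.ceilDiv`). -/
theorem balanced_part_size_floor_or_ceil (m b j : ℕ) (hb : 1 ≤ b) :
    (j + 1) * m / b - j * m / b = m / b ∨ (j + 1) * m / b - j * m / b = m ⌈/⌉ b := by
  have hb0 : 0 < b := hb
  obtain ⟨q, r, hr, hm⟩ : ∃ q r, r < b ∧ m = b * q + r :=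
    ⟨m / b, m % b, Nat.mod_lt _ hb0, (Nat.div_add_mod m b).symm⟩
  subst hm
  have h1 : ∀ k : ℕ, k * (b * q + r) / b = k * q + k * r / b := by
    intro k
    have : k * (b * q + r) = b * (k * q) + k * r := by ring
    rw [this, Nat.mul_add_div hb0]
  rw [h1, h1]
  have hdiv : (b * q + r) / b = q + r / b := Nat.mul_add_div hb0 q r
  have hr0 : r / b = 0 := Nat.div_eq_of_lt hr
  have hceil : (b * q + r) ⌈/⌉ b = (b * q + r + b - 1) / b :=
    Nat.ceilDiv_eq_add_pred_div _ _
  have hmono : j * r / b ≤ (j + 1) * r / b :=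
    Nat.div_le_div_right (Nat.mul_le_mul_right r (by omega))
  have hupper : (j + 1) * r / b ≤ j * r / b + 1 := by
    have h2 : (j + 1) * r ≤ j * r + b := by nlinarith
    calc (j + 1) * r / b ≤ (j * r + b) / b := Nat.div_le_div_right h2
      _ = j * r / b + 1 := Nat.add_div_right _ hb0
  have hq : (j + 1) * q = j * q + q := by ring
  rcases Nat.eq_zero_or_pos r with hr' | hr'
  · left
    subst hr'
    simp only [Nat.add_zero, Nat.mul_zero, Nat.zero_div, Nat.mul_div_cancel_left _ hb0]
    omega
  · have hceil' : (b * q + r) ⌈/⌉ b = q + 1 := by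
      rw [hceil]
      have : b * q + r + b - 1 = b * (q + 1) + (r - 1) := by rw [Nat.mul_add, Nat.mul_one]; omega
      rw [this, Nat.mul_add_div hb0, Nat.div_eq_of_lt (by omega)]
    rcases Nat.lt_or_ge (j * r / b) ((j + 1) * r / b) with h | h
    · right; rw [hceil']; omega
    · left; rw [hdiv, hr0]; omega
end

section
/- Let (U, ≤) be a linear order and let X ⊆ U be the disjoint union of finite sets S_0, S_1, …, S_{k-1} such that for all indices i < j, every element of S_i is strictly less than every element of S_j. Let r be a natural number and let i be the index such that Σ_{j < i} |S_j| ≤ r < Σ_{j ≤ i} |S_j|. Then the element of X of rank r equals the element of S_i of rank r − Σ_{j < i} |S_j|, i.e. Select_X(r) = Select_{S_i}(r − Σ_{j < i} |S_j|). -/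
/-- `Select_X(r)`: the `(r+1)`-st smallest element of `X` (the element of rank `r`),
realized as the `r`-th entry of the sorted list of `X` (with a default value when
`r ≥ |X|`). -/
def finsetSelect {U : Type*} [LinearOrder U] [Inhabited U] (X : Finset U) (r : ℕ) : U :=
  (X.sort (· ≤ ·)).getD r default

lemma sort_union_stacked {U : Type*} [LinearOrder U] (A B : Finset U)
    (h : ∀ a ∈ A, ∀ b ∈ B, a < b) :
    (A ∪ B).sort (· ≤ ·) = A.sort (· ≤ ·) ++ B.sort (· ≤ ·) := by
  have hdisj : Disjoint A B := by
    rw [Finset.disjoint_left]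
    intro a ha hb
    exact absurd (h a ha a hb) (lt_irrefl a)
  have hperm : (A.sort (· ≤ ·) ++ B.sort (· ≤ ·)).Perm ((A ∪ B).sort (· ≤ ·)) := by
    rw [← Multiset.coe_eq_coe, ← Multiset.coe_add, Finset.sort_eq, Finset.sort_eq,
      Finset.sort_eq, ← Finset.disjUnion_eq_union A B hdisj]
    rfl
  refine List.Perm.eq_of_pairwise' (Finset.pairwise_sort _ _) ?_ hperm.symm
  rw [List.pairwise_append]
  refine ⟨Finset.pairwise_sort _ _, Finset.pairwise_sort _ _, ?_⟩
  intro a ha b hb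
  exact (h a ((Finset.mem_sort _).1 ha) b ((Finset.mem_sort _).1 hb)).le

lemma sort_biUnion_stacked {U : Type*} [LinearOrder U] (k : ℕ) (S : ℕ → Finset U)
    (hord : ∀ i j, i < j → j < k → ∀ x ∈ S i, ∀ y ∈ S j, x < y) :
    ((Finset.range k).biUnion S).sort (· ≤ ·)
      = (List.range k).flatMap (fun j => (S j).sort (· ≤ ·)) := by
  induction k with
  | zero => simp
  | succ n ih =>
    rw [Finset.range_add_one, Finset.biUnion_insert, Finset.union_comm,
      sort_union_stacked, List.range_succ, List.flatMap_append,
      ih (fun i j hij hj => hord i j hij (hj.trans n.lt_succ_self))]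
    · simp
    · intro a ha b hb
      rw [Finset.mem_biUnion] at ha
      obtain ⟨j, hj, haj⟩ := ha
      exact hord j n (Finset.mem_range.1 hj) n.lt_succ_self a haj b hb

lemma getD_flatMap_range {U : Type*} (d : U) :
    ∀ (i k : ℕ) (L : ℕ → List U) (r : ℕ), i < k →
      (∑ j ∈ Finset.range i, (L j).length) ≤ r →
      r < ∑ j ∈ Finset.range (i + 1), (L j).length →
      ((List.range k).flatMap L).getD r d
        = (L i).getD (r - ∑ j ∈ Finset.range i, (L j).length) d := by
  intro i
  induction i with
  | zero =>
    intro k L r hik hlo hhi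
    obtain ⟨n, rfl⟩ := Nat.exists_eq_add_of_lt hik
    simp only [Finset.range_one, Finset.sum_singleton, Finset.sum_range_succ,
      Finset.range_zero, Finset.sum_empty, zero_add] at hhi ⊢
    rw [List.range_succ_eq_map, List.flatMap_cons, List.getD_append _ _ _ _ hhi,
      Nat.sub_zero]
  | succ i ih =>
    intro k L r hik hlo hhi
    obtain ⟨n, rfl⟩ := Nat.exists_eq_add_of_lt hik
    have h0 : (L 0).length ≤ r := le_trans (by
      rw [Finset.sum_range_succ']
      exact Nat.le_add_left _ _) hlo
    rw [List.range_succ_eq_map, List.flatMap_cons, List.getD_append_right _ _ _ _ h0,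
      List.flatMap_map]
    have key := ih (i + 1 + n) (fun j => L (j + 1)) (r - (L 0).length)
      (by omega) ?_ ?_
    · simp only [Nat.succ_eq_add_one] at key ⊢
      rw [key]
      congr 1
      rw [Finset.sum_range_succ' (fun j => (L j).length) i]
      omega
    · rw [Finset.sum_range_succ' (fun j => (L j).length) i] at hlo
      omega
    · rw [Finset.sum_range_succ' (fun j => (L j).length) (i + 1),
        Finset.sum_range_succ] at hhi
      rw [Finset.sum_range_succ]
      omega

/-- if `X` is the disjoint union of `S 0, …, S (k-1)` with every element
of `S i` strictly below every element of `S j` for `i < j`, and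
`Σ_{j<i} |S j| ≤ r < Σ_{j≤i} |S j|`, then
`Select_X(r) = Select_{S i}(r − Σ_{j<i} |S j|)`. -/
theorem select_eq_select_block {U : Type*} [LinearOrder U] [Inhabited U]
    (k : ℕ) (S : ℕ → Finset U) (X : Finset U)
    (hX : X = (Finset.range k).biUnion S)
    (hord : ∀ i j, i < j → j < k → ∀ x ∈ S i, ∀ y ∈ S j, x < y)
    (r : ℕ) (i : ℕ) (hi : i < k)
    (hlo : (∑ j ∈ Finset.range i, (S j).card) ≤ r)
    (hhi : r < ∑ j ∈ Finset.range (i + 1), (S j).card) :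
    finsetSelect X r = finsetSelect (S i) (r - ∑ j ∈ Finset.range i, (S j).card) := by
  subst hX
  unfold finsetSelect
  rw [sort_biUnion_stacked k S hord]
  have hlen : ∀ j : ℕ, ((S j).sort (· ≤ ·)).length = (S j).card :=
    fun j => Finset.length_sort _
  rw [getD_flatMap_range default i k (fun j => (S j).sort (· ≤ ·)) r hi
    (by simpa [hlen] using hlo) (by simpa [hlen] using hhi)]
  simp [hlen]
end
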